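/- Let L be a Lie algebra with an sl₂-triple (X₂, Y₂, H₂) acting on it via the adjoint action, and suppose τ = Σ_{j≤J} τ_j is a finite sum of elements where each τ_j has ad-H₂-weight −2, graded by a second integer grading in which X₂ has degree 1, τ_j has degree j, and suppose σ = X₂ + σ₀ + σ₋₁ + ⋯ (with σ_j of degree j) satisfies [σ, τ] = H₂ where H₂ has degree 0. Then τ_j = 0 for all j ≥ 0, and τ₋₁ = Y₂. -/

import Mathlib

section

attribute [local instance] LieRing.ofAssociativeRing

/-- In a finite-dimensional setting, a vector of `ad H₂`-weight `−2` killed by `ad X₂`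
(a primitive vector of negative weight) must vanish. -/
lemma stmt19_key {W : Type*} [AddCommGroup W] [Module ℂ W] [FiniteDimensional ℂ W]
    {X₂ Y₂ H₂ : Module.End ℂ W} (triple : IsSl2Triple H₂ X₂ Y₂)
    (v : Module.End ℂ W) (hHv : ⁅H₂, v⁆ = (-2 : ℂ) • v) (hXv : ⁅X₂, v⁆ = 0) : v = 0 := by
  by_contra hv
  have P : triple.HasPrimitiveVectorWith v (-2 : ℂ) := ⟨hv, hHv, hXv⟩
  obtain ⟨n, hn⟩ := P.exists_nat
  have h2 : (-2 : ℤ) = n := by exact_mod_cast hn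
  omega

end

/-- Let `L` be the Lie algebra of operators on a (finite-dimensional,
bigraded) object, with commutator bracket, containing an `sl₂`-triple `(X₂, Y₂, H₂)`.
Suppose `τ = ∑_{j ≤ J} τ_j` is a finite sum of components of `ad H₂`-weight `−2`, graded by a
second integer grading in which `X₂ = σ₁` has degree `1` and `τ_j` has degree `j`, and
`σ = X₂ + σ₀ + σ₋₁ + ⋯` (each `σ_j` of degree `j` and `ad H₂`-weight `2`) satisfies
`[σ, τ] = H₂`, where `H₂` has degree `0`; the relation is imposed degree by degree.
Then `τ_j = 0` for all `j ≥ 0`, and `τ₋₁ = Y₂`. -/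
theorem stmt19 {W : Type*} [AddCommGroup W] [Module ℂ W] [FiniteDimensional ℂ W]
    (X₂ Y₂ H₂ : Module.End ℂ W)
    (hHX : ⁅H₂, X₂⁆ = (2 : ℂ) • X₂) (hHY : ⁅H₂, Y₂⁆ = (-2 : ℂ) • Y₂) (hXY : ⁅X₂, Y₂⁆ = H₂)
    (s t : ℤ → Module.End ℂ W) (N J : ℤ)
    -- the components of `σ`:  `σ₁ = X₂`, vanishing above degree `1` and below degree `N`
    (hs1 : s 1 = X₂) (hs_top : ∀ j : ℤ, 1 < j → s j = 0) (hs_bot : ∀ j : ℤ, j < N → s j = 0)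
    -- the components of `τ`, finitely many
    (ht_top : ∀ j : ℤ, J < j → t j = 0) (ht_bot : ∀ j : ℤ, j < N → t j = 0)
    -- weights under `ad H₂`
    (hswt : ∀ j : ℤ, ⁅H₂, s j⁆ = (2 : ℂ) • s j)
    (htwt : ∀ j : ℤ, ⁅H₂, t j⁆ = (-2 : ℂ) • t j)
    -- the relation `[σ, τ] = H₂`, expanded degree by degree
    (hrel : ∀ m : ℤ, ∑ j ∈ Finset.Icc N 1, ⁅s j, t (m - j)⁆
      = if m = 0 then H₂ else 0) :
    (∀ j : ℤ, 0 ≤ j → t j = 0) ∧ t (-1) = Y₂ := by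
  letI : LieRing (Module.End ℂ W) := LieRing.ofAssociativeRing
  -- Degenerate case: `H₂ = 0` forces everything to be zero.
  by_cases hH0 : H₂ = 0
  · have hY0 : Y₂ = 0 := by
      have := hHY
      rw [hH0, zero_lie] at this
      have := this.symm
      rw [smul_eq_zero] at this
      rcases this with h | h
      · norm_num at h
      · exact h
    have ht0 : ∀ j : ℤ, t j = 0 := by
      intro j
      have := htwt j
      rw [hH0, zero_lie] at this
      have := this.symm
      rw [smul_eq_zero] at this
      rcases this with h | h
      · norm_num at h
      · exact h
    exact ⟨fun j _ => ht0 j, by rw [ht0, hY0]⟩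
  -- Main case: `(H₂, X₂, Y₂)` is an honest `sl₂`-triple.
  have triple : IsSl2Triple H₂ X₂ Y₂ :=
    { h_ne_zero := hH0
      lie_e_f := hXY
      lie_h_e_nsmul := by rw [hHX]; module
      lie_h_f_nsmul := by rw [hHY]; module }
  have hX0 : X₂ ≠ 0 := triple.e_ne_zero
  have hN1 : N ≤ 1 := by
    by_contra h
    exact hX0 (hs1 ▸ hs_bot 1 (by omega))
  -- If all components of `τ` of degree `> m` vanish, then `[X₂, t m] = [σ, τ]_{m+1}`.
  have hsum : ∀ m : ℤ, (∀ k : ℤ, m < k → t k = 0) →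
      ⁅X₂, t m⁆ = if m + 1 = 0 then H₂ else 0 := by
    intro m hk
    rw [← hrel (m + 1)]
    rw [Finset.sum_eq_single_of_mem 1 (by simp [hN1])]
    · rw [hs1]; norm_num
    · intro j hj hj1
      rw [hk (m + 1 - j) (by rw [Finset.mem_Icc] at hj; omega), lie_zero]
  -- Part 1: `t j = 0` for `j ≥ 0`, by downward induction.
  have part1 : ∀ j : ℤ, 0 ≤ j → t j = 0 := by
    have aux : ∀ n : ℕ, ∀ m : ℤ, 0 ≤ m → J - m ≤ n → t m = 0 := by
      intro n
      induction n using Nat.strong_induction_on with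
      | _ n ih =>
        intro m hm hJm
        have hX : ⁅X₂, t m⁆ = 0 := by
          rw [hsum m]
          · simp [show m + 1 ≠ 0 by omega]
          · intro k hk
            by_cases hkJ : J < k
            · exact ht_top k hkJ
            · have hn : (J - k).toNat < n := by omega
              exact ih (J - k).toNat hn k (by omega) (by omega)
        exact stmt19_key triple (t m) (htwt m) hX
    intro j hj
    exact aux (J - j).toNat j hj (by omega)
  refine ⟨part1, ?_⟩
  -- Part 2: `[X₂, t (-1)] = H₂`, hence `t (-1) - Y₂` is primitive of weight `-2`, so zero.
  have hX : ⁅X₂, t (-1)⁆ = H₂ := by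
    have := hsum (-1) (fun k hk => part1 k (by omega))
    simpa using this
  have hdiff : t (-1) - Y₂ = 0 := by
    apply stmt19_key triple
    · rw [lie_sub, htwt, hHY]; module
    · rw [lie_sub, hX, hXY, sub_self]
  have := sub_eq_zero.mp hdiff
  exact this
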